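/- (Trace bounds on the a priori error covariance) Under the stated assumptions, the trace of the positive definite Riccati solution Σ satisfies tr(W) + tr(AᵀA)·λ_min(W)/(1 + λ_min(W)·M) ≤ tr(Σ) ≤ tr(W) + tr(AᵀA)/m. -/

import Mathlib

open Matrix

section Helpers

variable {m : Type*} [Fintype m] [DecidableEq m]

open scoped MatrixOrder in
/-- Square root of a positive semidefinite real matrix (via the continuous functional calculus). -/
noncomputable def Matrix.PosSemidef.sqrt {A : Matrix m m ℝ} (_ : A.PosSemidef) : Matrix m m ℝ :=
  CFC.sqrt A

open scoped MatrixOrder in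
lemma Matrix.PosSemidef.posSemidef_sqrt {A : Matrix m m ℝ} (hA : A.PosSemidef) :
    hA.sqrt.PosSemidef :=
  (CFC.sqrt_nonneg A).posSemidef

open scoped MatrixOrder in
lemma Matrix.PosSemidef.sqrt_mul_self {A : Matrix m m ℝ} (hA : A.PosSemidef) :
    hA.sqrt * hA.sqrt = A :=
  CFC.sqrt_mul_sqrt_self A hA.nonneg

private lemma psd_smul' {A : Matrix m m ℝ} (hA : A.PosSemidef) {a : ℝ} (ha : 0 ≤ a) :
    (a • A).PosSemidef := by
  constructor
  · unfold Matrix.IsHermitian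
    rw [conjTranspose_smul, hA.1]; simp
  · intro x
    exact (hA.smul ha).2 x

private lemma trace_nonneg' {A : Matrix m m ℝ} (hA : A.PosSemidef) : 0 ≤ A.trace :=
  Finset.sum_nonneg fun i _ => by
    have := hA.dotProduct_mulVec_nonneg (Pi.single i 1)
    simpa [dotProduct, mulVec, Pi.single_apply, Finset.sum_ite_eq] using this

private lemma trace_mul_nonneg' {B Y : Matrix m m ℝ} (hB : B.PosSemidef) (hY : Y.PosSemidef) :
    0 ≤ (B * Y).trace := by
  obtain ⟨R, hR⟩ : ∃ R : Matrix m m ℝ, B = Rᵀ * R := ⟨hB.sqrt, by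
    rw [← conjTranspose_eq_transpose_of_trivial, hB.posSemidef_sqrt.1, hB.sqrt_mul_self]⟩
  rw [hR, Matrix.mul_assoc, trace_mul_comm]
  exact trace_nonneg' (hY.mul_mul_conjTranspose_same R)

private lemma sub_smul_one_psd {W : Matrix m m ℝ} (hW : W.PosDef) {a : ℝ}
    (ha : ∀ i, a ≤ hW.1.eigenvalues i) : (W - a • 1).PosSemidef := by
  have hsp := hW.1.spectral_theorem
  set U : Matrix m m ℝ := (hW.1.eigenvectorUnitary : Matrix m m ℝ) with hU
  have hunit : U * star U = 1 := (Matrix.mem_unitaryGroup_iff).mp hW.1.eigenvectorUnitary.2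
  have h1 : W - a • 1 = U * (diagonal (fun i => hW.1.eigenvalues i - a)) * star U := by
    have h2 : (a • (1 : Matrix m m ℝ)) = U * (a • 1) * star U := by
      rw [Matrix.mul_smul, Matrix.mul_one, Matrix.smul_mul, hunit]
    rw [h2]
    conv_lhs => rw [hsp, Unitary.conjStarAlgAut_apply, ← hU]
    rw [← Matrix.sub_mul, ← Matrix.mul_sub, smul_one_eq_diagonal, diagonal_sub]
    norm_num [Function.comp]
  rw [h1, Matrix.star_eq_conjTranspose]
  exact (PosSemidef.diagonal (fun i => by simpa using ha i)).mul_mul_conjTranspose_same U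

private lemma conj_sqrt_inv {P R : Matrix m m ℝ} (hP : P.PosDef) (hR : R.PosSemidef) :
    (hP.inv.posSemidef.sqrt * R * hP.inv.posSemidef.sqrt).PosSemidef := by
  have h := hR.mul_mul_conjTranspose_same hP.inv.posSemidef.sqrt
  rwa [hP.inv.posSemidef.posSemidef_sqrt.1] at h

private lemma sqrt_conj_self {P : Matrix m m ℝ} (hP : P.PosDef) :
    hP.inv.posSemidef.sqrt * P * hP.inv.posSemidef.sqrt = 1 := by
  set Q := hP.inv.posSemidef.sqrt with hQdef
  have hQ2 : Q * Q = P⁻¹ := hP.inv.posSemidef.sqrt_mul_self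
  have hQu : IsUnit Q.det := by
    have h : IsUnit (Q.det * Q.det) := by
      rw [← det_mul, hQ2]
      exact (isUnit_iff_isUnit_det _).mp hP.inv.isUnit
    exact isUnit_of_mul_isUnit_left h
  have hP' : P = Q⁻¹ * Q⁻¹ := by
    rw [← Matrix.mul_inv_rev, hQ2,
      Matrix.nonsing_inv_nonsing_inv _ ((isUnit_iff_isUnit_det _).mp hP.isUnit)]
  rw [hP', Matrix.mul_assoc, Matrix.mul_assoc Q⁻¹ Q⁻¹ Q,
    Matrix.nonsing_inv_mul _ hQu, Matrix.mul_one, Matrix.mul_nonsing_inv _ hQu]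

private lemma sqrt_conj_smul_one {P : Matrix m m ℝ} (hP : P.PosDef) (a : ℝ) :
    hP.inv.posSemidef.sqrt * (a • 1) * hP.inv.posSemidef.sqrt = a • P⁻¹ := by
  rw [Matrix.mul_smul, Matrix.mul_one, Matrix.smul_mul, hP.inv.posSemidef.sqrt_mul_self]

/-- If `a•1 ≤ P` then `P⁻¹ ≤ a⁻¹•1`. -/
private lemma flip_lower {P : Matrix m m ℝ} (hP : P.PosDef) {a : ℝ} (ha : 0 < a)
    (h : (P - a • 1).PosSemidef) : (a⁻¹ • 1 - P⁻¹).PosSemidef := by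
  have h2 := conj_sqrt_inv hP h
  rw [Matrix.mul_sub, Matrix.sub_mul, sqrt_conj_self hP, sqrt_conj_smul_one hP] at h2
  have h3 := psd_smul' h2 (le_of_lt (inv_pos.mpr ha))
  have h4 : a⁻¹ • ((1 : Matrix m m ℝ) - a • P⁻¹) = a⁻¹ • 1 - P⁻¹ := by
    rw [smul_sub, smul_smul, inv_mul_cancel₀ ha.ne', one_smul]
  rwa [h4] at h3

/-- If `P ≤ b•1` then `b⁻¹•1 ≤ P⁻¹`. -/
private lemma flip_upper {P : Matrix m m ℝ} (hP : P.PosDef) {b : ℝ} (hb : 0 < b)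
    (h : (b • 1 - P).PosSemidef) : (P⁻¹ - b⁻¹ • 1).PosSemidef := by
  have h2 := conj_sqrt_inv hP h
  rw [Matrix.mul_sub, Matrix.sub_mul, sqrt_conj_self hP, sqrt_conj_smul_one hP] at h2
  have h3 := psd_smul' h2 (le_of_lt (inv_pos.mpr hb))
  have h4 : b⁻¹ • (b • P⁻¹ - (1 : Matrix m m ℝ)) = P⁻¹ - b⁻¹ • 1 := by
    rw [smul_sub, smul_smul, inv_mul_cancel₀ hb.ne', one_smul]
  rwa [h4] at h3

end Helpers

/-- Trace bounds on the a priori error covariance `S` of the filtering Riccati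
equation: `tr W + tr(AᵀA)·λ_min(W)/(1 + λ_min(W)·M) ≤ tr S ≤ tr W + tr(AᵀA)/m`,
where `m = min_i c_i²/σ_i²` and `M = max_i c_i²/σ_i²`. -/
theorem riccati_trace_bounds {n : ℕ} (hn : 1 ≤ n)
    (A W S : Matrix (Fin n) (Fin n) ℝ)
    (c σ : Fin n → ℝ) (hc : ∀ i, 0 < c i) (hσ : ∀ i, 0 < σ i)
    (hW : W.PosDef) (hS : S.PosDef)
    (hric : S = A * S * Aᵀ -
        A * S * (Matrix.diagonal c)ᵀ *
          (Matrix.diagonal c * S * (Matrix.diagonal c)ᵀ +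
            Matrix.diagonal fun i => σ i ^ 2)⁻¹ *
          Matrix.diagonal c * S * Aᵀ + W) :
    W.trace + (Aᵀ * A).trace * (⨅ j, hW.1.eigenvalues j) /
        (1 + (⨅ j, hW.1.eigenvalues j) * ⨆ i, c i ^ 2 / σ i ^ 2) ≤ S.trace ∧
      S.trace ≤ W.trace + (Aᵀ * A).trace / ⨅ i, c i ^ 2 / σ i ^ 2 := by
  haveI : Nonempty (Fin n) := ⟨⟨0, hn⟩⟩
  set d : Fin n → ℝ := fun i => c i ^ 2 / σ i ^ 2 with hd
  have hdpos : ∀ i, 0 < d i := fun i => div_pos (pow_pos (hc i) 2) (pow_pos (hσ i) 2)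
  -- Woodbury step
  set D := diagonal c with hDdef
  set Ci := diagonal (fun i => (σ i ^ 2)⁻¹) with hCi
  have hSdet : IsUnit S.det := (isUnit_iff_isUnit_det _).mp hS.isUnit
  have hSinv : S⁻¹⁻¹ = S := Matrix.nonsing_inv_nonsing_inv _ hSdet
  have hCiinv : Ci⁻¹ = diagonal (fun i => σ i ^ 2) := by
    apply Matrix.inv_eq_right_inv
    rw [hCi, diagonal_mul_diagonal]
    have hf : (fun i => (σ i ^ 2)⁻¹ * σ i ^ 2) = fun _ => (1 : ℝ) := by
      funext i
      exact inv_mul_cancel₀ (pow_pos (hσ i) 2).ne'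
    rw [hf, diagonal_one]
  have hDVD : D * Ci * D = diagonal d := by
    rw [hCi, hDdef, diagonal_mul_diagonal, diagonal_mul_diagonal]
    apply congrArg diagonal
    funext i
    field_simp
    ring
  have hU1 : IsUnit S⁻¹ := hS.inv.isUnit
  have hU2 : IsUnit Ci := (PosDef.diagonal (fun i => inv_pos.mpr (pow_pos (hσ i) 2))).isUnit
  have hU3 : IsUnit (Ci⁻¹ + D * S⁻¹⁻¹ * D) := by
    rw [hCiinv, hSinv]
    have hpsd : (D * S * Dᴴ).PosSemidef := hS.posSemidef.mul_mul_conjTranspose_same D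
    have hDH : Dᴴ = D := by simp [hDdef, diagonal_conjTranspose]
    rw [hDH] at hpsd
    exact ((PosDef.diagonal (fun i => pow_pos (hσ i) 2)).add_posSemidef hpsd).isUnit
  have hwood := Matrix.add_mul_mul_inv_eq_sub S⁻¹ D Ci D hU1 hU2 hU3
  rw [hDVD] at hwood
  set P := S⁻¹ + diagonal d with hPdef
  have hP : P.PosDef :=
    hS.inv.add_posSemidef (PosSemidef.diagonal (fun i => (hdpos i).le))
  have hw : P⁻¹ = S - S * D * (D * S * D + diagonal (fun i => σ i ^ 2))⁻¹ * D * S := by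
    rw [hPdef, hwood, hSinv, hCiinv, add_comm (diagonal fun i => σ i ^ 2)]
  -- key identity
  have key : S = A * P⁻¹ * Aᵀ + W := by
    rw [hw]
    conv_lhs => rw [hric]
    rw [show Dᵀ = D from by rw [hDdef, diagonal_transpose]]
    noncomm_ring
  set B := Aᵀ * A with hB
  have hBpsd : B.PosSemidef := by
    have := posSemidef_conjTranspose_mul_self A
    rwa [conjTranspose_eq_transpose_of_trivial] at this
  have htr : S.trace = (B * P⁻¹).trace + W.trace := by
    conv_lhs => rw [key]
    rw [trace_add, trace_mul_cycle]
  -- infima / suprema facts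
  set ml : ℝ := ⨅ i, d i with hml
  set Ml : ℝ := ⨆ i, d i with hMl
  set lw : ℝ := ⨅ j, hW.1.eigenvalues j with hlw
  have hmle : ∀ i, ml ≤ d i := fun i => ciInf_le (Set.Finite.bddBelow (Set.finite_range d)) i
  have hmpos : 0 < ml := by
    obtain ⟨i, hi⟩ := Finite.exists_min d
    exact lt_of_lt_of_le (hdpos i) (le_ciInf hi)
  have hMle : ∀ i, d i ≤ Ml := fun i => le_ciSup (Set.Finite.bddAbove (Set.finite_range d)) i
  have hMpos : 0 < Ml :=
    lt_of_lt_of_le (hdpos (Classical.arbitrary _)) (hMle (Classical.arbitrary _))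
  have hlwle : ∀ i, lw ≤ hW.1.eigenvalues i :=
    fun i => ciInf_le (Set.Finite.bddBelow (Set.finite_range _)) i
  have hlwpos : 0 < lw := by
    obtain ⟨i, hi⟩ := Finite.exists_min hW.1.eigenvalues
    exact lt_of_lt_of_le (hW.eigenvalues_pos i) (le_ciInf hi)
  constructor
  · -- lower bound
    have hSW : (S - W).PosSemidef := by
      have h1 : S - W = A * P⁻¹ * Aᵀ := by rw [key]; abel
      rw [h1, ← conjTranspose_eq_transpose_of_trivial]
      exact hP.inv.posSemidef.mul_mul_conjTranspose_same A
    have hWl : (W - lw • 1).PosSemidef := sub_smul_one_psd hW hlwle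
    have hSl : (S - lw • 1).PosSemidef := by
      have h1 : S - lw • 1 = (S - W) + (W - lw • 1) := by abel
      rw [h1]
      exact hSW.add hWl
    have hSinvle := flip_lower hS hlwpos hSl
    have hdub : (Ml • 1 - diagonal d).PosSemidef := by
      have h1 : Ml • (1 : Matrix (Fin n) (Fin n) ℝ) - diagonal d
          = diagonal (fun i => Ml - d i) := by
        rw [smul_one_eq_diagonal, ← diagonal_sub]
      rw [h1]
      exact PosSemidef.diagonal (fun i => sub_nonneg.mpr (hMle i))
    have hPub : ((lw⁻¹ + Ml) • 1 - P).PosSemidef := by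
      have h1 : (lw⁻¹ + Ml) • (1 : Matrix (Fin n) (Fin n) ℝ) - P
          = (lw⁻¹ • 1 - S⁻¹) + (Ml • 1 - diagonal d) := by
        rw [hPdef, add_smul]
        abel
      rw [h1]
      exact hSinvle.add hdub
    have hbpos : 0 < lw⁻¹ + Ml := by positivity
    have hflip := flip_upper hP hbpos hPub
    have htr1 : 0 ≤ (B * (P⁻¹ - (lw⁻¹ + Ml)⁻¹ • 1)).trace := trace_mul_nonneg' hBpsd hflip
    rw [Matrix.mul_sub, trace_sub, Matrix.mul_smul, Matrix.mul_one, trace_smul,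
      smul_eq_mul, sub_nonneg] at htr1
    have hbinv : (lw⁻¹ + Ml)⁻¹ = lw / (1 + lw * Ml) := by
      apply inv_eq_of_mul_eq_one_right
      field_simp
    have : B.trace * lw / (1 + lw * Ml) = (lw⁻¹ + Ml)⁻¹ * B.trace := by
      rw [hbinv]; ring
    rw [htr, this]
    linarith
  · -- upper bound
    have hPm : (P - ml • 1).PosSemidef := by
      have h1 : P - ml • 1 = S⁻¹ + diagonal (fun i => d i - ml) := by
        rw [hPdef, smul_one_eq_diagonal, ← diagonal_sub]
        abel
      rw [h1]
      exact hS.inv.posSemidef.add (PosSemidef.diagonal (fun i => sub_nonneg.mpr (hmle i)))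
    have hflip := flip_lower hP hmpos hPm
    have htr1 : 0 ≤ (B * (ml⁻¹ • 1 - P⁻¹)).trace := trace_mul_nonneg' hBpsd hflip
    rw [Matrix.mul_sub, trace_sub, Matrix.mul_smul, Matrix.mul_one, trace_smul,
      smul_eq_mul, sub_nonneg] at htr1
    rw [htr, div_eq_inv_mul]
    linarith
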